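/- arXiv:0905.3290 — 2 statements merged into one kernel-verified Lean document; each statement's English description precedes it below -/
import Mathlib

section
/- Every closed subgroup of the topological group ℝ × ℤ is exactly one of the following: (I) ℤ·(1/α, 0) for a unique α ∈ [0, ∞] (with the conventions ℤ·(1/0,0) = {0} and α = ∞ giving ℝ × {0}); (II) ℤ·(γ, n) for unique γ ∈ ℝ and n ∈ ℕ \ {0}; (III) ℤ·(1/α, 0) + ℤ·(β/α, n) for unique α ∈ (0,∞), β mod ℤ, and n ∈ ℕ \ {0}; (IV) ℝ × nℤ for a unique n ∈ ℕ \ {0}. -/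
open TopologicalSpace Filter Topology

/-- The space of closed subsets of `X`. -/
def ChabautySpace (X : Type*) [TopologicalSpace X] := {F : Set X // IsClosed F}

/-- The underlying closed set. -/
def ChabautySpace.toSet {X : Type*} [TopologicalSpace X] (F : ChabautySpace X) : Set X := F.1

/-- The Chabauty (Fell) topology on the space of closed subsets, generated by the sets
`O_K = {F | F ∩ K = ∅}` for `K` compact and `O'_U = {F | F ∩ U ≠ ∅}` for `U` open. -/
instance (X : Type*) [TopologicalSpace X] : TopologicalSpace (ChabautySpace X) :=
  TopologicalSpace.generateFrom
    ({S | ∃ K : Set X, IsCompact K ∧ S = {F : ChabautySpace X | F.toSet ∩ K = ∅}} ∪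
     {S | ∃ U : Set X, IsOpen U ∧ S = {F : ChabautySpace X | (F.toSet ∩ U).Nonempty}})

/-- The space of closed subgroups of an additive topological group `G`. -/
def ClosedAddSubgroups (G : Type*) [AddGroup G] [TopologicalSpace G] :=
  {H : AddSubgroup G // IsClosed (H : Set G)}

/-- The underlying subgroup. -/
def ClosedAddSubgroups.toAddSubgroup {G : Type*} [AddGroup G] [TopologicalSpace G]
    (H : ClosedAddSubgroups G) : AddSubgroup G := H.1

/-- The Chabauty topology on the space of closed subgroups, induced by the
Chabauty topology on closed subsets. -/
instance (G : Type*) [AddGroup G] [TopologicalSpace G] :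
    TopologicalSpace (ClosedAddSubgroups G) :=
  TopologicalSpace.induced
    (fun H : ClosedAddSubgroups G => (⟨(H.toAddSubgroup : Set G), H.2⟩ : ChabautySpace G))
    (inferInstance : TopologicalSpace (ChabautySpace G))

open scoped ENNReal

/-- Family (I): the closed subgroups `ℤ·(1/α, 0)` contained in `ℝ × {0}`, parametrized by
`α ∈ [0,∞]`; conventions: `α = 0` gives the trivial subgroup, `α = ∞` gives `ℝ × {0}`. -/
noncomputable def GI (α : ℝ≥0∞) : AddSubgroup (ℝ × ℤ) :=
  if α = ⊤ then (⊤ : AddSubgroup ℝ).prod ⊥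
  else AddSubgroup.zmultiples (((α.toReal)⁻¹ : ℝ), (0 : ℤ))

/-- Family (II): the infinite cyclic subgroups `ℤ·(γ, n)`. -/
def GII (γ : ℝ) (n : ℕ) : AddSubgroup (ℝ × ℤ) := AddSubgroup.zmultiples (γ, (n : ℤ))

/-- Family (III): the subgroups `ℤ·(1/α, 0) + ℤ·(β/α, n)`. -/
noncomputable def GIII (α β : ℝ) (n : ℕ) : AddSubgroup (ℝ × ℤ) :=
  AddSubgroup.zmultiples ((α⁻¹ : ℝ), (0 : ℤ)) ⊔ AddSubgroup.zmultiples ((β / α : ℝ), (n : ℤ))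

/-- Family (IV): the subgroups `ℝ × nℤ`. -/
def GIV (n : ℕ) : AddSubgroup (ℝ × ℤ) :=
  (⊤ : AddSubgroup ℝ).prod (AddSubgroup.zmultiples (n : ℤ))

namespace Stmt7Aux
open AddSubgroup
open scoped ENNReal

lemma mem_zmult_pair {c : ℝ} {m : ℤ} {p : ℝ × ℤ} :
    p ∈ zmultiples ((c, m) : ℝ × ℤ) ↔ ∃ j : ℤ, p.1 = j * c ∧ p.2 = j * m := by
  simp only [AddSubgroup.mem_zmultiples_iff, Prod.ext_iff, Prod.smul_fst, Prod.smul_snd,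
    zsmul_eq_mul, smul_eq_mul]
  exact ⟨fun ⟨j,h1,h2⟩ => ⟨j,h1.symm,h2.symm⟩, fun ⟨j,h1,h2⟩ => ⟨j,h1.symm,h2.symm⟩⟩

lemma mem_pairsup {a g : ℝ} {n : ℤ} {p : ℝ × ℤ} :
    p ∈ zmultiples ((a, (0:ℤ)) : ℝ × ℤ) ⊔ zmultiples ((g, n) : ℝ × ℤ) ↔
    ∃ j k : ℤ, p.1 = j * a + k * g ∧ p.2 = k * n := by
  rw [AddSubgroup.mem_sup]
  constructor
  · rintro ⟨y, hy, z, hz, rfl⟩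
    obtain ⟨j, hj1, hj2⟩ := mem_zmult_pair.mp hy
    obtain ⟨k, hk1, hk2⟩ := mem_zmult_pair.mp hz
    exact ⟨j, k, by simp [hj1, hk1], by simp [hj2, hk2]⟩
  · rintro ⟨j, k, h1, h2⟩
    refine ⟨(j*a, 0), mem_zmult_pair.mpr ⟨j, by simp⟩, (k*g, k*n),
      mem_zmult_pair.mpr ⟨k, by simp⟩, ?_⟩
    ext <;> simp [h1.symm, h2.symm]

lemma mem_GIII {α β : ℝ} {n : ℕ} {p : ℝ × ℤ} :
    p ∈ GIII α β n ↔ ∃ j k : ℤ, p.1 = j * α⁻¹ + k * (β/α) ∧ p.2 = k * n := mem_pairsup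

lemma not_half {c : ℝ} (hc : c ≠ 0) (j : ℤ) : c/2 ≠ j * c := by
  intro h
  have h1 : (2*(j:ℝ) - 1) * c = 0 := by linarith
  rcases mul_eq_zero.mp h1 with h2 | h2
  · have h3 : ((2*j - 1 : ℤ) : ℝ) = 0 := by push_cast; linarith
    have h4 : (2*j - 1 : ℤ) = 0 := by exact_mod_cast h3
    omega
  · exact hc h2

lemma int_unit_pos {j j' : ℤ} (h : j * j' = 1) (hpos : 0 < j) : j = 1 := by
  rcases Int.mul_eq_one_iff_eq_one_or_neg_one.mp h with ⟨h1, _⟩ | ⟨h1, _⟩ <;> omega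

lemma GI_snd {α : ℝ≥0∞} {p : ℝ × ℤ} (hp : p ∈ GI α) : p.2 = 0 := by
  unfold GI at hp
  split_ifs at hp with h
  · exact (AddSubgroup.mem_prod.mp hp).2
  · obtain ⟨j, _, h2⟩ := mem_zmult_pair.mp hp
    simp [h2]

lemma GI_mem_top (x : ℝ) : ((x, (0:ℤ)) : ℝ × ℤ) ∈ GI ⊤ := by
  unfold GI; rw [if_pos rfl]; simp [AddSubgroup.mem_prod]

lemma GI_ne_top_eq {α : ℝ≥0∞} (h : α ≠ ⊤) :
    GI α = zmultiples (((α.toReal)⁻¹ : ℝ), (0 : ℤ)) := by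
  unfold GI; rw [if_neg h]

lemma GI_inj (α α' : ℝ≥0∞) (h : GI α = GI α') : α = α' := by
  have key : ∀ β β' : ℝ≥0∞, β = ⊤ → β' ≠ ⊤ → GI β ≠ GI β' := by
    intro β β' hβ hβ' heq
    set c : ℝ := (β'.toReal)⁻¹ with hc
    have hc0 : 0 ≤ c := by positivity
    rcases eq_or_ne c 0 with h0 | h0
    · have : ((1:ℝ), (0:ℤ)) ∈ GI β' := by
        rw [← heq, hβ]; exact GI_mem_top 1
      rw [GI_ne_top_eq hβ'] at this
      obtain ⟨j, h1, _⟩ := mem_zmult_pair.mp this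
      simp only [← hc, h0, mul_zero] at h1
      norm_num at h1
    · have : ((c/2, (0:ℤ)) : ℝ × ℤ) ∈ GI β' := by
        rw [← heq, hβ]; exact GI_mem_top _
      rw [GI_ne_top_eq hβ'] at this
      obtain ⟨j, h1, _⟩ := mem_zmult_pair.mp this
      exact not_half h0 j h1
  rcases eq_or_ne α ⊤ with hα | hα <;> rcases eq_or_ne α' ⊤ with hα' | hα'
  · rw [hα, hα']
  · exact absurd h (key α α' hα hα')
  · exact absurd h.symm (key α' α hα' hα)
  · set c : ℝ := (α.toReal)⁻¹ with hc
    set c' : ℝ := (α'.toReal)⁻¹ with hc'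
    have hc0 : 0 ≤ c := by positivity
    have hc'0 : 0 ≤ c' := by positivity
    rw [GI_ne_top_eq hα, GI_ne_top_eq hα'] at h
    have m1 : ((c, (0:ℤ)) : ℝ × ℤ) ∈ zmultiples ((c', (0:ℤ)) : ℝ × ℤ) := by
      rw [← h]; exact mem_zmultiples _
    have m2 : ((c', (0:ℤ)) : ℝ × ℤ) ∈ zmultiples ((c, (0:ℤ)) : ℝ × ℤ) := by
      rw [h]; exact mem_zmultiples _
    obtain ⟨j, hj, -⟩ := mem_zmult_pair.mp m1
    obtain ⟨j', hj', -⟩ := mem_zmult_pair.mp m2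
    simp only at hj hj'
    have hcc : c = c' := by
      rcases eq_or_ne c 0 with h0 | h0
      · rw [h0] at hj'
        simp only [mul_zero] at hj'
        rw [h0, hj']
      · have hcm : c = (j:ℝ) * ((j':ℝ) * c) := by rw [← hj']; exact hj
        have hcast : ((j * j' : ℤ) : ℝ) = 1 := by
          push_cast
          have h2 := mul_left_cancel₀ h0 (show c * 1 = c * ((j:ℝ)*(j':ℝ)) by nlinarith)
          linarith
        have hjj : j * j' = 1 := by exact_mod_cast hcast
        have hj1 : j = 1 := by
          rcases Int.mul_eq_one_iff_eq_one_or_neg_one.mp hjj with ⟨h1, _⟩ | ⟨h1, h2⟩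
          · exact h1
          · exfalso
            rw [h1] at hj
            simp only [Int.cast_neg, Int.cast_one, neg_mul, one_mul] at hj
            have hc'pos : 0 < c' := by
              rcases hc'0.lt_or_eq with hh | hh
              · exact hh
              · exact absurd (show c = 0 by rw [hj, ← hh]; ring) h0
            linarith [hc0]
        rw [hj1] at hj; simpa using hj
    have ht : α.toReal = α'.toReal := by
      have h5 := congrArg Inv.inv hcc
      simpa [hc, hc'] using h5
    exact (ENNReal.toReal_eq_toReal_iff' hα hα').mp ht

lemma GII_inj (γ γ' : ℝ) (n n' : ℕ) (hn : 0 < n) (hn' : 0 < n')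
    (h : GII γ n = GII γ' n') : γ = γ' ∧ n = n' := by
  have m1 : ((γ', (n':ℤ)) : ℝ × ℤ) ∈ GII γ n := by rw [h]; exact mem_zmultiples _
  have m2 : ((γ, (n:ℤ)) : ℝ × ℤ) ∈ GII γ' n' := by rw [← h]; exact mem_zmultiples _
  obtain ⟨j, hj1, hj2⟩ := mem_zmult_pair.mp m1
  obtain ⟨l, hl1, hl2⟩ := mem_zmult_pair.mp m2
  simp only at hj1 hj2 hl1 hl2
  have hnz : (n:ℤ) ≠ 0 := by exact_mod_cast hn.ne'
  have hjl : l * j = 1 := by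
    have : (n:ℤ) = l * (j * n) := by rw [← hj2]; exact hl2
    have h2 : (l * j - 1) * n = 0 := by linarith [this]
    rcases mul_eq_zero.mp h2 with h3 | h3
    · omega
    · exact absurd h3 hnz
  have hj1' : j = 1 := by
    rcases Int.mul_eq_one_iff_eq_one_or_neg_one.mp hjl with ⟨_, h1⟩ | ⟨_, h1⟩
    · exact h1
    · exfalso; rw [h1] at hj2; omega
  constructor
  · rw [hj1'] at hj1; simpa using hj1.symm
  · rw [hj1'] at hj2; simp at hj2; exact_mod_cast hj2.symm

lemma GIII_inj (α α' β β' : ℝ) (n n' : ℕ) (hα : 0 < α) (hα' : 0 < α')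
    (hn : 0 < n) (hn' : 0 < n') (h : GIII α β n = GIII α' β' n') :
    α = α' ∧ n = n' ∧ ∃ p : ℤ, β' = β + p := by
  have hnz : (n:ℤ) ≠ 0 := by exact_mod_cast hn.ne'
  have hnz' : (n':ℤ) ≠ 0 := by exact_mod_cast hn'.ne'
  have hαne : α ≠ 0 := hα.ne'
  have hαne' : α' ≠ 0 := hα'.ne'
  -- a-generators
  have ma : ((α⁻¹, (0:ℤ)) : ℝ × ℤ) ∈ GIII α' β' n' := by
    rw [← h]; exact mem_GIII.mpr ⟨1, 0, by simp, by simp⟩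
  have ma' : ((α'⁻¹, (0:ℤ)) : ℝ × ℤ) ∈ GIII α β n := by
    rw [h]; exact mem_GIII.mpr ⟨1, 0, by simp, by simp⟩
  obtain ⟨j, k, hj1, hj2⟩ := mem_GIII.mp ma
  obtain ⟨j', k', hj1', hj2'⟩ := mem_GIII.mp ma'
  simp only at hj1 hj2 hj1' hj2'
  have hk0 : k = 0 := by
    rcases mul_eq_zero.mp hj2.symm with h3 | h3
    · exact h3
    · exact absurd h3 hnz'
  have hk0' : k' = 0 := by
    rcases mul_eq_zero.mp hj2'.symm with h3 | h3
    · exact h3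
    · exact absurd h3 hnz
  rw [hk0] at hj1; rw [hk0'] at hj1'
  simp only [Int.cast_zero, zero_mul, add_zero] at hj1 hj1'
  -- α = α'
  have hinv : 0 < α⁻¹ := by positivity
  have hinv' : 0 < α'⁻¹ := by positivity
  have hjj : ((j * j' : ℤ) : ℝ) = 1 := by
    have : α⁻¹ = (j:ℝ) * ((j':ℝ) * α⁻¹) := by rw [← hj1']; exact hj1
    push_cast
    have h2 := mul_left_cancel₀ hinv.ne' (show α⁻¹ * 1 = α⁻¹ * ((j:ℝ)*(j':ℝ)) by nlinarith)
    linarith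
  have hjj' : j * j' = 1 := by exact_mod_cast hjj
  have hj1pos : j = 1 := by
    rcases Int.mul_eq_one_iff_eq_one_or_neg_one.mp hjj' with ⟨h1, _⟩ | ⟨h1, _⟩
    · exact h1
    · exfalso; rw [h1] at hj1; push_cast at hj1; nlinarith
  rw [hj1pos] at hj1
  simp only [Int.cast_one, one_mul] at hj1
  have hαα : α = α' := by
    have := congrArg Inv.inv hj1
    simpa using this
  -- n = n'
  have mg : ((β/α, (n:ℤ)) : ℝ × ℤ) ∈ GIII α' β' n' := by
    rw [← h]; exact mem_GIII.mpr ⟨0, 1, by simp, by simp⟩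
  have mg' : ((β'/α', (n':ℤ)) : ℝ × ℤ) ∈ GIII α β n := by
    rw [h]; exact mem_GIII.mpr ⟨0, 1, by simp, by simp⟩
  obtain ⟨u, v, hu1, hu2⟩ := mem_GIII.mp mg
  obtain ⟨u', v', hu1', hu2'⟩ := mem_GIII.mp mg'
  simp only at hu1 hu2 hu1' hu2'
  have hvv : v' * v = 1 := by
    have : (n:ℤ) = v * n' := hu2
    have h2 : (n':ℤ) = v' * n := hu2'
    have h3 : (v' * v - 1) * n' = 0 := by nlinarith [this, h2]
    rcases mul_eq_zero.mp h3 with h4 | h4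
    · omega
    · exact absurd h4 hnz'
  have hv1 : v = 1 := by
    rcases Int.mul_eq_one_iff_eq_one_or_neg_one.mp hvv with ⟨_, h1⟩ | ⟨_, h1⟩
    · exact h1
    · exfalso; rw [h1] at hu2; omega
  have hnn : n = n' := by
    rw [hv1] at hu2; simp at hu2; exact_mod_cast hu2
  refine ⟨hαα, hnn, ⟨-u, ?_⟩⟩
  rw [hv1] at hu1
  simp only [Int.cast_one, one_mul] at hu1
  rw [← hαα] at hu1
  -- hu1 : β/α = u * α⁻¹ + β'/α
  have : β = (u:ℝ) + β' := by
    field_simp at hu1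
    linarith
  push_cast
  linarith

lemma GIV_inj (n n' : ℕ) (hn : 0 < n) (hn' : 0 < n') (h : GIV n = GIV n') : n = n' := by
  have m1 : ((0:ℝ), (n:ℤ)) ∈ GIV n' := by
    rw [← h]; exact AddSubgroup.mem_prod.mpr ⟨trivial, mem_zmultiples _⟩
  have m2 : ((0:ℝ), (n':ℤ)) ∈ GIV n := by
    rw [h]; exact AddSubgroup.mem_prod.mpr ⟨trivial, mem_zmultiples _⟩
  have d1 : (n':ℤ) ∣ (n:ℤ) := Int.mem_zmultiples_iff.mp (AddSubgroup.mem_prod.mp m1).2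
  have d2 : (n:ℤ) ∣ (n':ℤ) := Int.mem_zmultiples_iff.mp (AddSubgroup.mem_prod.mp m2).2
  have h3 : (n:ℤ) = (n':ℤ) := Int.dvd_antisymm (Int.ofNat_nonneg n) (Int.ofNat_nonneg n') d2 d1
  exact_mod_cast h3

lemma GI_ne_GII (α : ℝ≥0∞) (γ : ℝ) (n : ℕ) (hn : 0 < n) : GI α ≠ GII γ n := by
  intro h
  have : ((γ, (n:ℤ)) : ℝ × ℤ) ∈ GI α := by rw [h]; exact mem_zmultiples _
  have h2 := GI_snd this
  simp only at h2
  omega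

lemma GI_ne_GIII (α : ℝ≥0∞) (α' β : ℝ) (n : ℕ) (hα' : 0 < α') (hn : 0 < n) :
    GI α ≠ GIII α' β n := by
  intro h
  have : ((β/α', (n:ℤ)) : ℝ × ℤ) ∈ GI α := by
    rw [h]; exact mem_GIII.mpr ⟨0, 1, by simp, by simp⟩
  have h2 := GI_snd this
  simp only at h2
  omega

lemma GI_ne_GIV (α : ℝ≥0∞) (n : ℕ) (hn : 0 < n) : GI α ≠ GIV n := by
  intro h
  have : (((0:ℝ), (n:ℤ)) : ℝ × ℤ) ∈ GI α := by
    rw [h]; exact AddSubgroup.mem_prod.mpr ⟨trivial, mem_zmultiples _⟩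
  have h2 := GI_snd this
  simp only at h2
  omega

lemma GII_ne_GIII (γ : ℝ) (n : ℕ) (α β : ℝ) (m : ℕ) (hn : 0 < n) (hα : 0 < α)
    (hm : 0 < m) : GII γ n ≠ GIII α β m := by
  intro h
  have : ((α⁻¹, (0:ℤ)) : ℝ × ℤ) ∈ GII γ n := by
    rw [h]; exact mem_GIII.mpr ⟨1, 0, by simp, by simp⟩
  obtain ⟨j, h1, h2⟩ := mem_zmult_pair.mp this
  simp only at h1 h2
  have hj0 : j = 0 := by
    rcases mul_eq_zero.mp h2.symm with h3 | h3
    · exact h3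
    · exfalso; exact (by exact_mod_cast hn.ne' : (n:ℤ) ≠ 0) h3
  rw [hj0] at h1
  simp only [Int.cast_zero, zero_mul] at h1
  have : 0 < α⁻¹ := by positivity
  linarith [h1]

lemma GII_ne_GIV (γ : ℝ) (n m : ℕ) (hn : 0 < n) (hm : 0 < m) : GII γ n ≠ GIV m := by
  intro h
  have : (((1:ℝ), (0:ℤ)) : ℝ × ℤ) ∈ GII γ n := by
    rw [h]; exact AddSubgroup.mem_prod.mpr ⟨trivial, zero_mem _⟩
  obtain ⟨j, h1, h2⟩ := mem_zmult_pair.mp this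
  simp only at h1 h2
  have hj0 : j = 0 := by
    rcases mul_eq_zero.mp h2.symm with h3 | h3
    · exact h3
    · exfalso; exact (by exact_mod_cast hn.ne' : (n:ℤ) ≠ 0) h3
  rw [hj0] at h1
  norm_num at h1

lemma GIII_ne_GIV (α β : ℝ) (n m : ℕ) (hα : 0 < α) (hn : 0 < n) (hm : 0 < m) :
    GIII α β n ≠ GIV m := by
  intro h
  have : ((α⁻¹/2, (0:ℤ)) : ℝ × ℤ) ∈ GIII α β n := by
    rw [h]; exact AddSubgroup.mem_prod.mpr ⟨trivial, zero_mem _⟩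
  obtain ⟨j, k, h1, h2⟩ := mem_GIII.mp this
  simp only at h1 h2
  have hk0 : k = 0 := by
    rcases mul_eq_zero.mp h2.symm with h3 | h3
    · exact h3
    · exfalso; exact (by exact_mod_cast hn.ne' : (n:ℤ) ≠ 0) h3
  rw [hk0] at h1
  simp only [Int.cast_zero, zero_mul, add_zero] at h1
  exact not_half (by positivity : (0:ℝ) < α⁻¹).ne' j h1

lemma real_closed_classify (A : AddSubgroup ℝ) (hA : IsClosed (A : Set ℝ)) :
    A = ⊥ ∨ A = ⊤ ∨ ∃ a : ℝ, 0 < a ∧ A = zmultiples a := by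
  rcases A.dense_or_cyclic with h | ⟨a, ha⟩
  · right; left
    exact SetLike.ext' (by rw [← hA.closure_eq, h.closure_eq]; rfl)
  · rw [← zmultiples_eq_closure] at ha
    rcases lt_trichotomy a 0 with h|h|h
    · right; right
      refine ⟨-a, by linarith, ?_⟩
      rw [ha]; ext x
      simp only [mem_zmultiples_iff]
      exact ⟨fun ⟨k, hk⟩ => ⟨-k, by simp [← hk]⟩, fun ⟨k, hk⟩ => ⟨-k, by simp [← hk]⟩⟩
    · left; simp [ha, h, zmultiples_zero_eq_bot]
    · right; right; exact ⟨a, h, ha⟩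

lemma exists_classify (H : AddSubgroup (ℝ × ℤ)) (hH : IsClosed (H : Set (ℝ × ℤ))) :
      (∃ α : ℝ≥0∞, H = GI α) ∨
      (∃ (γ : ℝ) (n : ℕ), 0 < n ∧ H = GII γ n) ∨
      (∃ (α β : ℝ) (n : ℕ), 0 < α ∧ 0 < n ∧ H = GIII α β n) ∨
      (∃ n : ℕ, 0 < n ∧ H = GIV n) := by
  set A : AddSubgroup ℝ := H.comap (AddMonoidHom.inl ℝ ℤ) with hAdef
  have hAmem : ∀ x : ℝ, x ∈ A ↔ ((x, (0:ℤ)) : ℝ × ℤ) ∈ H := fun x => Iff.rfl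
  have hAclosed : IsClosed (A : Set ℝ) := by
    have : (A : Set ℝ) = (fun x : ℝ => ((x, 0) : ℝ × ℤ)) ⁻¹' (H : Set (ℝ × ℤ)) := rfl
    rw [this]
    exact hH.preimage (continuous_id.prodMk continuous_const)
  obtain ⟨m0, hm0⟩ := Int.subgroup_cyclic (H.map (AddMonoidHom.snd ℝ ℤ))
  set n : ℕ := m0.natAbs with hndef
  have hN : H.map (AddMonoidHom.snd ℝ ℤ) = zmultiples ((n:ℤ)) := by
    rw [hm0, ← zmultiples_eq_closure]
    ext k
    simp [Int.mem_zmultiples_iff, hndef, Int.natAbs_dvd]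
  have hproj : ∀ p : ℝ × ℤ, p ∈ H → (n:ℤ) ∣ p.2 := by
    intro p hp
    have : p.2 ∈ H.map (AddMonoidHom.snd ℝ ℤ) := ⟨p, hp, rfl⟩
    rw [hN] at this
    exact Int.mem_zmultiples_iff.mp this
  rcases Nat.eq_zero_or_pos n with hn0 | hnpos
  · -- n = 0 : H ⊆ ℝ × {0}
    have hz : ∀ p : ℝ × ℤ, p ∈ H → p.2 = 0 := by
      intro p hp
      have := hproj p hp
      simpa [hn0] using this
    rcases real_closed_classify A hAclosed with hA | hA | ⟨a, ha, hA⟩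
    · left; refine ⟨0, ?_⟩
      have : GI 0 = ⊥ := by
        unfold GI
        rw [if_neg (by simp)]
        simp [zmultiples_zero_eq_bot, Prod.ext_iff]
      rw [this, eq_bot_iff]
      intro p hp
      have h2 := hz p hp
      have h1 : p.1 ∈ A := by
        rw [hAmem]
        rwa [show ((p.1, (0:ℤ)) : ℝ × ℤ) = p by ext <;> simp [h2]]
      rw [hA] at h1
      simp only [AddSubgroup.mem_bot] at h1 ⊢
      ext <;> simp [h1, h2]
    · left; refine ⟨⊤, ?_⟩
      unfold GI; rw [if_pos rfl]
      ext p
      simp only [AddSubgroup.mem_prod, AddSubgroup.mem_top, AddSubgroup.mem_bot, true_and]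
      constructor
      · exact hz p
      · intro h2
        have : p.1 ∈ A := hA ▸ AddSubgroup.mem_top _
        rw [hAmem] at this
        rwa [show ((p.1, (0:ℤ)) : ℝ × ℤ) = p by ext <;> simp [h2]] at this
    · left; refine ⟨ENNReal.ofReal a⁻¹, ?_⟩
      have hne : ENNReal.ofReal a⁻¹ ≠ ⊤ := ENNReal.ofReal_ne_top
      have hto : (ENNReal.ofReal a⁻¹).toReal⁻¹ = a := by
        rw [ENNReal.toReal_ofReal (by positivity), inv_inv]
      unfold GI; rw [if_neg hne, hto]
      ext p
      rw [mem_zmult_pair]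
      constructor
      · intro hp
        have h2 := hz p hp
        have h1 : p.1 ∈ A := by
          rw [hAmem]
          rwa [show ((p.1, (0:ℤ)) : ℝ × ℤ) = p by ext <;> simp [h2]]
        rw [hA, mem_zmultiples_iff] at h1
        obtain ⟨k, hk⟩ := h1
        exact ⟨k, by simp [← hk, zsmul_eq_mul], by simp [h2]⟩
      · rintro ⟨j, h1, h2⟩
        have : (j : ℝ) * a ∈ A := by
          rw [hA, mem_zmultiples_iff]; exact ⟨j, by simp [zsmul_eq_mul]⟩
        rw [hAmem] at this
        rwa [show ((((j:ℝ) * a), (0:ℤ)) : ℝ × ℤ) = p by ext <;> simp [h1, h2]] at this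
  · -- n > 0
    have hnz : (n : ℤ) ≠ 0 := by exact_mod_cast hnpos.ne'
    have hnN : (n : ℤ) ∈ H.map (AddMonoidHom.snd ℝ ℤ) := by
      rw [hN]; exact mem_zmultiples _
    obtain ⟨q, hq, hq2⟩ := hnN
    set γ : ℝ := q.1 with hγdef
    have hγ : ((γ, (n:ℤ)) : ℝ × ℤ) ∈ H := by
      have : (q.1, q.2) ∈ H := hq
      rwa [show q.2 = (n:ℤ) from hq2] at this
    have hdec : ∀ p : ℝ × ℤ, p ∈ H → ∃ m : ℤ, p.2 = m * n ∧ p.1 - m * γ ∈ A := by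
      intro p hp
      obtain ⟨m, hm⟩ := hproj p hp
      refine ⟨m, by rw [hm]; ring, ?_⟩
      rw [hAmem]
      have he : ((p.1 - m*γ, (0:ℤ)) : ℝ × ℤ) = p - m • ((γ,(n:ℤ)) : ℝ × ℤ) := by
        ext
        · simp [zsmul_eq_mul]
        · simp [zsmul_eq_mul, hm]; ring
      rw [he]
      exact H.sub_mem hp (H.zsmul_mem hγ m)
    have hcomp : ∀ (x : ℝ) (m : ℤ), x ∈ A → ((x + m*γ, m*(n:ℤ)) : ℝ × ℤ) ∈ H := by
      intro x m hx
      rw [hAmem] at hx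
      have he : ((x + m*γ, m*(n:ℤ)) : ℝ × ℤ) = (x, (0:ℤ)) + m • ((γ,(n:ℤ)) : ℝ × ℤ) := by
        ext <;> simp [zsmul_eq_mul]
      rw [he]
      exact H.add_mem hx (H.zsmul_mem hγ m)
    rcases real_closed_classify A hAclosed with hA | hA | ⟨a, ha, hA⟩
    · right; left
      refine ⟨γ, n, hnpos, ?_⟩
      unfold GII
      ext p
      rw [mem_zmult_pair]
      constructor
      · intro hp
        obtain ⟨m, h2, h1⟩ := hdec p hp
        rw [hA, AddSubgroup.mem_bot, sub_eq_zero] at h1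
        exact ⟨m, h1, h2⟩
      · rintro ⟨j, h1, h2⟩
        have := hcomp 0 j (A.zero_mem)
        rwa [show ((0 + (j:ℝ)*γ, j*(n:ℤ)) : ℝ × ℤ) = p by ext <;> simp [h1, h2]] at this
    · right; right; right
      refine ⟨n, hnpos, ?_⟩
      unfold GIV
      ext p
      simp only [AddSubgroup.mem_prod, AddSubgroup.mem_top, true_and, Int.mem_zmultiples_iff]
      constructor
      · exact hproj p
      · rintro ⟨m, hm⟩
        have := hcomp (p.1 - m*γ) m (hA ▸ AddSubgroup.mem_top _)
        rwa [show ((p.1 - m*γ + m*γ, m*(n:ℤ)) : ℝ × ℤ) = p by ext <;> simp [hm] <;> ring] at this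
    · right; right; left
      refine ⟨a⁻¹, γ * a⁻¹, n, by positivity, hnpos, ?_⟩
      have hane : a ≠ 0 := ha.ne'
      have e1 : (a⁻¹)⁻¹ = a := inv_inv a
      have e2 : (γ * a⁻¹) / a⁻¹ = γ := by field_simp
      unfold GIII
      rw [e1, e2]
      ext p
      rw [mem_pairsup]
      constructor
      · intro hp
        obtain ⟨m, h2, h1⟩ := hdec p hp
        rw [hA, mem_zmultiples_iff] at h1
        obtain ⟨j, hj⟩ := h1
        refine ⟨j, m, ?_, h2⟩
        have : (j:ℝ) * a = p.1 - m * γ := by simpa [zsmul_eq_mul] using hj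
        linarith
      · rintro ⟨j, k, h1, h2⟩
        have hja : (j:ℝ) * a ∈ A := by
          rw [hA, mem_zmultiples_iff]; exact ⟨j, by simp [zsmul_eq_mul]⟩
        have := hcomp ((j:ℝ)*a) k hja
        rwa [show (((j:ℝ)*a + k*γ, k*(n:ℤ)) : ℝ × ℤ) = p by ext <;> simp [h1, h2]] at this

end Stmt7Aux

theorem stmt_7 :
    -- existence: every closed subgroup of `ℝ × ℤ` is of one of the four forms
    (∀ H : AddSubgroup (ℝ × ℤ), IsClosed (H : Set (ℝ × ℤ)) →
      (∃ α : ℝ≥0∞, H = GI α) ∨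
      (∃ (γ : ℝ) (n : ℕ), 0 < n ∧ H = GII γ n) ∨
      (∃ (α β : ℝ) (n : ℕ), 0 < α ∧ 0 < n ∧ H = GIII α β n) ∨
      (∃ n : ℕ, 0 < n ∧ H = GIV n)) ∧
    -- uniqueness of parameters within each family
    (∀ α α' : ℝ≥0∞, GI α = GI α' → α = α') ∧
    (∀ (γ γ' : ℝ) (n n' : ℕ), 0 < n → 0 < n' → GII γ n = GII γ' n' → γ = γ' ∧ n = n') ∧
    (∀ (α α' β β' : ℝ) (n n' : ℕ), 0 < α → 0 < α' → 0 < n → 0 < n' →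
      GIII α β n = GIII α' β' n' → α = α' ∧ n = n' ∧ ∃ p : ℤ, β' = β + p) ∧
    (∀ n n' : ℕ, 0 < n → 0 < n' → GIV n = GIV n' → n = n') ∧
    -- the four families are pairwise disjoint
    (∀ (α : ℝ≥0∞) (γ : ℝ) (n : ℕ), 0 < n → GI α ≠ GII γ n) ∧
    (∀ (α : ℝ≥0∞) (α' β : ℝ) (n : ℕ), 0 < α' → 0 < n → GI α ≠ GIII α' β n) ∧
    (∀ (α : ℝ≥0∞) (n : ℕ), 0 < n → GI α ≠ GIV n) ∧
    (∀ (γ : ℝ) (n : ℕ) (α β : ℝ) (m : ℕ), 0 < n → 0 < α → 0 < m → GII γ n ≠ GIII α β m) ∧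
    (∀ (γ : ℝ) (n m : ℕ), 0 < n → 0 < m → GII γ n ≠ GIV m) ∧
    (∀ (α β : ℝ) (n m : ℕ), 0 < α → 0 < n → 0 < m → GIII α β n ≠ GIV m) := by
  refine ⟨Stmt7Aux.exists_classify, Stmt7Aux.GI_inj, Stmt7Aux.GII_inj,
    fun a a' b b' n n' ha ha' hn hn' h => Stmt7Aux.GIII_inj a a' b b' n n' ha ha' hn hn' h,
    Stmt7Aux.GIV_inj, Stmt7Aux.GI_ne_GII,
    fun α α' β n h1 h2 => Stmt7Aux.GI_ne_GIII α α' β n h1 h2,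
    Stmt7Aux.GI_ne_GIV,
    fun γ n α β m h1 h2 h3 => Stmt7Aux.GII_ne_GIII γ n α β m h1 h2 h3,
    Stmt7Aux.GII_ne_GIV,
    fun α β n m h1 h2 h3 => Stmt7Aux.GIII_ne_GIV α β n m h1 h2 h3⟩
end

section
/- Let H be a closed subgroup of ℝ × ℤ with projection to ℤ equal to nℤ (n > 0) and with H ∩ (ℝ × {0}) = (1/α)ℤ × {0} for some α ∈ (0,∞). Then there exists β ∈ ℝ, unique modulo ℤ, such that H = ℤ·(1/α, 0) + ℤ·(β/α, n). -/
open TopologicalSpace Filter Topology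

open scoped ENNReal

theorem stmt_9 (H : AddSubgroup (ℝ × ℤ)) (hc : IsClosed (H : Set (ℝ × ℤ)))
    (n : ℕ) (hn : 0 < n) (α : ℝ) (hα : 0 < α)
    (hproj : AddSubgroup.map (AddMonoidHom.snd ℝ ℤ) H = AddSubgroup.zmultiples (n : ℤ))
    (hint : ∀ x : ℝ, (x, (0 : ℤ)) ∈ H ↔ x ∈ AddSubgroup.zmultiples (α⁻¹ : ℝ)) :
    ∃ β : ℝ, H = GIII α β n ∧ ∀ β' : ℝ, H = GIII α β' n → ∃ p : ℤ, β' = β + p := by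
  -- find b with (b, n) ∈ H
  have hnmem : ((n : ℤ)) ∈ AddSubgroup.map (AddMonoidHom.snd ℝ ℤ) H := by
    rw [hproj]; exact AddSubgroup.mem_zmultiples _
  obtain ⟨⟨b, m⟩, hbH, hm⟩ := hnmem
  simp only [AddMonoidHom.coe_snd] at hm
  subst hm
  have hα' : α ≠ 0 := ne_of_gt hα
  refine ⟨b * α, ?_, ?_⟩
  · have hba : b * α / α = b := by field_simp
    ext ⟨x, m⟩
    constructor
    · intro hx
      have hm : m ∈ AddSubgroup.zmultiples ((n : ℤ)) := by
        rw [← hproj]; exact ⟨(x, m), hx, rfl⟩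
      obtain ⟨k, hk⟩ := hm
      simp only [zsmul_eq_mul] at hk
      have hsub : ((x - k * b, (0 : ℤ)) : ℝ × ℤ) ∈ H := by
        have := H.sub_mem hx (H.zsmul_mem hbH k)
        simpa [Prod.ext_iff, zsmul_eq_mul, ← hk, sub_eq_zero] using this
      obtain ⟨j, hj⟩ := (hint _).mp hsub
      simp only [zsmul_eq_mul] at hj
      rw [GIII, AddSubgroup.mem_sup]
      refine ⟨(j * α⁻¹, 0), ⟨j, by simp [zsmul_eq_mul]⟩,
        (k * b, k * n), ⟨k, by simp [Prod.ext_iff, zsmul_eq_mul, hba]⟩, ?_⟩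
      simp only [Prod.mk_add_mk, Prod.mk.injEq]
      exact ⟨by rw [hj]; ring, by rw [zero_add]; exact_mod_cast hk⟩
    · intro hx
      rw [GIII, AddSubgroup.mem_sup] at hx
      obtain ⟨y, ⟨j, hj⟩, z, ⟨k, hk⟩, hyz⟩ := hx
      rw [← hyz, ← hj, ← hk]
      refine H.add_mem (H.zsmul_mem ?_ j) (H.zsmul_mem ?_ k)
      · exact (hint _).mpr (AddSubgroup.mem_zmultiples _)
      · rwa [hba]
  · intro β' hβ'
    have h1 : ((β' / α, (n : ℤ)) : ℝ × ℤ) ∈ H := by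
      rw [hβ', GIII, AddSubgroup.mem_sup]
      exact ⟨0, zero_mem _, (β' / α, n), AddSubgroup.mem_zmultiples _, by simp⟩
    have h2 : ((β' / α - b, (0 : ℤ)) : ℝ × ℤ) ∈ H := by
      have := H.sub_mem h1 hbH
      simpa [Prod.ext_iff, sub_eq_zero] using this
    obtain ⟨p, hp⟩ := (hint _).mp h2
    refine ⟨p, ?_⟩
    simp only [zsmul_eq_mul] at hp
    have := congrArg (· * α) hp
    field_simp at this ⊢
    linarith
end
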